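/- Let n ≥ 2 be an integer, δ ≥ 0, and let m : (0, T] → ℝ be a continuously differentiable function satisfying m'(r) + m(r)^2/(n-1) ≤ -1/2 + (1/2 + δ) for all r ∈ (0, T], with r^2 m(r) → 0 as r → 0⁺. Then for every t ∈ (0, T], m(t) ≤ (n-1)/t + δ t / 3. -/

import Mathlib

open Set Filter

/-- Riccati comparison for the mean curvature of geodesic spheres on a Ricci
shrinker with `Hess f ≤ 1/2 + δ`:  if `m` is `C¹` on `(0, T]` with
`m' + m²/(n-1) ≤ -1/2 + (1/2 + δ)` and `r² m(r) → 0` as `r → 0⁺`, then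
`m(t) ≤ (n-1)/t + δ t / 3` on `(0, T]`. -/
theorem stmt1 (n : ℕ) (hn : 2 ≤ n) (δ T : ℝ) (hδ : 0 ≤ δ) (hT : 0 < T)
    (m m' : ℝ → ℝ)
    (hderiv : ∀ r ∈ Ioc (0 : ℝ) T, HasDerivAt m (m' r) r)
    (hcont : ContinuousOn m' (Ioc (0 : ℝ) T))
    (hineq : ∀ r ∈ Ioc (0 : ℝ) T,
      m' r + (m r) ^ 2 / (n - 1 : ℝ) ≤ -(1 / 2) + (1 / 2 + δ))
    (hlim : Tendsto (fun r => r ^ 2 * m r) (nhdsWithin 0 (Ioi 0)) (nhds 0)) :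
    ∀ t ∈ Ioc (0 : ℝ) T, m t ≤ (n - 1 : ℝ) / t + δ * t / 3 := by
  intro t ht
  have ht0 : 0 < t := ht.1
  have hn1 : (1 : ℝ) ≤ (n : ℝ) - 1 := by
    have : (2 : ℝ) ≤ (n : ℝ) := by exact_mod_cast hn
    linarith
  have hn1' : (0 : ℝ) < (n : ℝ) - 1 := by linarith
  set G : ℝ → ℝ := fun r => r ^ 2 * m r with hG
  set G' : ℝ → ℝ := fun r => 2 * r * m r + r ^ 2 * m' r with hG'
  set H : ℝ → ℝ := fun r => ((n : ℝ) - 1) * r + δ * r ^ 3 / 3 with hH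
  set H' : ℝ → ℝ := fun r => ((n : ℝ) - 1) + δ * r ^ 2 with hH'
  -- derivative of G on Ioc 0 T
  have hGd : ∀ r ∈ Ioc (0 : ℝ) T, HasDerivAt G (G' r) r := by
    intro r hr
    have h1 : HasDerivAt (fun x : ℝ => x ^ 2) (2 * r) r := by
      simpa using hasDerivAt_pow 2 r
    have := h1.mul (hderiv r hr)
    exact this
  have hHd : ∀ r : ℝ, HasDerivAt H (H' r) r := by
    intro r
    have h1 : HasDerivAt (fun x : ℝ => ((n : ℝ) - 1) * x) ((n : ℝ) - 1) r :=
      by simpa using (hasDerivAt_id r).const_mul ((n : ℝ) - 1)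
    have h2 : HasDerivAt (fun x : ℝ => δ * x ^ 3 / 3) (δ * r ^ 2) r := by
      have := (hasDerivAt_pow 3 r).const_mul δ
      have h3 := this.div_const 3
      refine h3.congr_deriv ?_
      push_cast; ring
    exact h1.add h2
  -- pointwise bound G' ≤ H'
  have hbound : ∀ r ∈ Ioc (0 : ℝ) T, G' r ≤ H' r := by
    intro r hr
    have h1 : m' r + (m r) ^ 2 / ((n : ℝ) - 1) ≤ δ := by
      have := hineq r hr; linarith
    have hc : (m r) ^ 2 / ((n : ℝ) - 1) * ((n : ℝ) - 1) = (m r) ^ 2 :=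
      div_mul_cancel₀ _ (ne_of_gt hn1')
    have h2 : (m' r + (m r) ^ 2 / ((n : ℝ) - 1)) * (r ^ 2 * ((n : ℝ) - 1)) ≤
        δ * (r ^ 2 * ((n : ℝ) - 1)) :=
      mul_le_mul_of_nonneg_right h1 (by positivity)
    have h3 : m' r * (r ^ 2 * ((n : ℝ) - 1)) + (m r) ^ 2 * r ^ 2 ≤
        δ * (r ^ 2 * ((n : ℝ) - 1)) := by nlinarith [h2, hc]
    simp only [hG', hH']
    nlinarith [sq_nonneg (r * m r - ((n : ℝ) - 1)), h3]
  -- continuity of G' on Ioc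
  have hmcont : ContinuousOn m (Ioc (0 : ℝ) T) := fun r hr =>
    (hderiv r hr).continuousAt.continuousWithinAt
  have hG'cont : ContinuousOn G' (Ioc (0 : ℝ) T) := by
    apply ContinuousOn.add
    · exact (continuousOn_const.mul continuousOn_id).mul hmcont
    · exact (continuousOn_pow 2).mul hcont
  -- key integral inequality for ε ∈ Ioc 0 t
  have key : ∀ ε ∈ Ioc (0 : ℝ) t, G t ≤ G ε + (H t - H ε) := by
    intro ε hε
    have hεt : ε ≤ t := hε.2
    have hsub : Icc ε t ⊆ Ioc (0 : ℝ) T := fun x hx =>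
      ⟨lt_of_lt_of_le hε.1 hx.1, le_trans hx.2 ht.2⟩
    have huIcc : uIcc ε t = Icc ε t := uIcc_of_le hεt
    have hintG' : IntervalIntegrable G' MeasureTheory.volume ε t :=
      ContinuousOn.intervalIntegrable (by rw [huIcc]; exact hG'cont.mono hsub)
    have hH'c : Continuous H' := by
      simp only [hH']; exact continuous_const.add (continuous_const.mul (continuous_pow 2))
    have hintH' : IntervalIntegrable H' MeasureTheory.volume ε t :=
      hH'c.intervalIntegrable ε t
    have hFTC1 : ∫ r in ε..t, G' r = G t - G ε :=
      intervalIntegral.integral_eq_sub_of_hasDerivAt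
        (fun x hx => hGd x (hsub (huIcc ▸ hx))) hintG'
    have hFTC2 : ∫ r in ε..t, H' r = H t - H ε :=
      intervalIntegral.integral_eq_sub_of_hasDerivAt
        (fun x hx => hHd x) hintH'
    have hmono : ∫ r in ε..t, G' r ≤ ∫ r in ε..t, H' r :=
      intervalIntegral.integral_mono_on hεt hintG' hintH'
        (fun x hx => hbound x (hsub hx))
    rw [hFTC1, hFTC2] at hmono
    linarith
  -- take the limit ε → 0⁺
  have hGt : G t ≤ H t := by
    have hHc : Continuous H := by
      simp only [hH]
      exact (continuous_const.mul continuous_id).add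
        ((continuous_const.mul (continuous_pow 3)).div_const 3)
    have hHcont : Tendsto H (nhdsWithin 0 (Ioi 0)) (nhds (H 0)) :=
      (hHc.tendsto 0).mono_left nhdsWithin_le_nhds
    have hH0 : H 0 = 0 := by simp [hH]
    have htend : Tendsto (fun ε => G ε + (H t - H ε)) (nhdsWithin 0 (Ioi 0))
        (nhds (0 + (H t - 0))) := by
      apply Tendsto.add hlim
      exact tendsto_const_nhds.sub (by simpa [hH0] using hHcont)
    have hev : ∀ᶠ ε in nhdsWithin 0 (Ioi 0), G t ≤ G ε + (H t - H ε) := by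
      filter_upwards [Ioc_mem_nhdsGT_of_mem (by simp [ht0] : (0:ℝ) ∈ Ico 0 t)]
        with ε hε using key ε hε
    have := ge_of_tendsto htend hev
    simpa using this
  -- conclude
  have hfin : ((n : ℝ) - 1) / t + δ * t / 3 = (((n : ℝ) - 1) * t + δ * t ^ 3 / 3) / t ^ 2 := by
    field_simp
  rw [hfin, le_div_iff₀ (by positivity : (0:ℝ) < t ^ 2)]
  have : t ^ 2 * m t ≤ ((n : ℝ) - 1) * t + δ * t ^ 3 / 3 := hGt
  linarith [this]
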